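/- arXiv:1301.2804 — 3 statements merged into one kernel-verified Lean document; each statement's English description precedes it below -/
import Mathlib

section
/- Let R be a ring with identity, let {a_{0,n}}, {a_{1,n}} be sequences in R, and let {r_n} be a sequence of units satisfying r_{n+1} = a_{0,n} + a_{1,n} r_n^{-1} for n ≥ 1. If {x_n} satisfies x_{n+1} = a_{0,n}x_n + a_{1,n}x_{n-1} and there is m ≥ 1 with a_{1,m} = 0, then x_n = r_n r_{n-1} ··· r_{m+1} x_m for all n ≥ m+1. -/
/-- If a coefficient `a₁ m` vanishes then from index `m+1` on, every solution is given by
products of the eigensequence terms. -/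
theorem second_order_vanishing_coefficient {R : Type*} [Ring R]
    (a₀ a₁ : ℕ → R) (r : ℕ → Rˣ) (x : ℕ → R)
    (hr : ∀ n ≥ 1, (r (n + 1) : R) = a₀ n + a₁ n * (((r n)⁻¹ : Rˣ) : R))
    (hx : ∀ n ≥ 1, x (n + 1) = a₀ n * x n + a₁ n * x (n - 1))
    (m : ℕ) (hm : 1 ≤ m) (ha : a₁ m = 0) :
    ∀ n ≥ m + 1, x n = ((List.range (n - m)).map (fun i => (r (n - i) : R))).prod * x m := by
  -- first: from index m on, x (n+1) = r (n+1) * x n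
  have key : ∀ n, m ≤ n → x (n + 1) = (r (n + 1) : R) * x n := by
    intro n hn
    induction n, hn using Nat.le_induction with
    | base =>
      rw [hx m hm, hr m hm, ha]
      simp
    | succ n hn ih =>
      have h1 : (1:ℕ) ≤ n + 1 := Nat.le_add_left 1 n
      rw [hx (n+1) h1, hr (n+1) h1]
      have : x (n + 1 - 1) = x n := by norm_num
      rw [this, add_mul, mul_assoc, ih]
      have h2 : a₁ (n+1) * (((r (n+1))⁻¹ : Rˣ) * ((r (n+1) : R) * x n)) = a₁ (n+1) * x n := by
        rw [← mul_assoc ((((r (n+1))⁻¹ : Rˣ)):R)]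
        simp
      rw [h2]
  intro n hn
  induction n, hn using Nat.le_induction with
  | base =>
    have : m + 1 - m = 1 := by omega
    rw [this]
    simp only [List.range_succ, List.range_zero, List.nil_append, List.map_cons, List.map_nil,
      List.prod_cons, List.prod_nil, mul_one, Nat.sub_zero]
    exact key m le_rfl
  | succ n hn ih =>
    have hs : n + 1 - m = (n - m) + 1 := by omega
    rw [key n (by omega), ih, hs, List.range_succ_eq_map]
    simp only [List.map_cons, List.map_map, List.prod_cons, Nat.sub_zero]
    rw [← mul_assoc]
    congr 2
    refine congrArg List.prod (List.map_congr_left ?_)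
    intro i _
    simp [Function.comp, Nat.succ_sub_succ]
end

section
/- Let R be a commutative ring with identity, let {a_n}, {b_n} be periodic sequences in R, and define sequences α_n, β_n by α_{n+1} = a_n α_n + b_n α_{n-1}, β_{n+1} = a_n β_n + b_n β_{n-1} with α_0 = 0, α_1 = 1, β_0 = 1, β_1 = 0. If r_1 ∈ R is a root of α_p r² + (β_p − α_{p+1}) r − β_{p+1} = 0, r_1 is a unit, and the recurrence r_{j+1} = a_j + b_j r_j^{-1} produces units r_2, ..., r_p, then extending {r_n} periodically with period p gives a sequence satisfying r_{n+1} r_n = a_n r_n + b_n for all n ≥ 1, where a_n, b_n have common period p. -/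
/-- Periodic coefficients: a root of the quadratic built from the fundamental solutions
yields a periodic eigensequence of period p. -/
theorem periodic_eigensequence {R : Type*} [CommRing R]
    (a b : ℕ → R) (p : ℕ) (hp : 0 < p)
    (ha : ∀ n, a (n + p) = a n) (hb : ∀ n, b (n + p) = b n)
    (α β : ℕ → R) (hα0 : α 0 = 0) (hα1 : α 1 = 1) (hβ0 : β 0 = 1) (hβ1 : β 1 = 0)
    (hα : ∀ n ≥ 1, α (n + 1) = a n * α n + b n * α (n - 1))
    (hβ : ∀ n ≥ 1, β (n + 1) = a n * β n + b n * β (n - 1))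
    (r : ℕ → Rˣ)
    (hroot : α p * (r 1 : R) ^ 2 + (β p - α (p + 1)) * (r 1 : R) - β (p + 1) = 0)
    (hrec : ∀ j, 1 ≤ j → j + 1 ≤ p → (r (j + 1) : R) = a j + b j * (((r j)⁻¹ : Rˣ) : R))
    (s : ℕ → R) (hs : ∀ j, 1 ≤ j → j ≤ p → s j = (r j : R))
    (hsper : ∀ n ≥ 1, s (n + p) = s n) :
    ∀ n ≥ 1, s (n + 1) * s n = a n * s n + b n := by
  set x : ℕ → R := fun n => α n * (r 1 : R) + β n with hxdef
  have hx0 : x 0 = 1 := by simp [hxdef, hα0, hβ0]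
  have hx1 : x 1 = (r 1 : R) := by simp [hxdef, hα1, hβ1]
  have hxrec : ∀ j, 1 ≤ j → x (j + 1) = a j * x j + b j * x (j - 1) := by
    intro j hj
    simp only [hxdef]
    rw [hα j hj, hβ j hj]; ring
  have key : ∀ j, 1 ≤ j → j ≤ p → x j = (r j : R) * x (j - 1) ∧ IsUnit (x j) := by
    intro j
    induction j with
    | zero => omega
    | succ j ih =>
      intro _ hjp
      rcases Nat.eq_zero_or_pos j with hj0 | hj1
      · subst hj0
        refine ⟨?_, ?_⟩
        · simp [hx0, hx1]
        · rw [hx1]; exact (r 1).isUnit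
      · obtain ⟨hj, hju⟩ := ih hj1 (by omega)
        have hr := hrec j hj1 hjp
        have hinv : (((r j)⁻¹ : Rˣ) : R) * (r j : R) = 1 := Units.inv_mul _
        have hstep : x (j + 1) = (r (j + 1) : R) * x j := by
          rw [hxrec j hj1, hr, hj]
          linear_combination (- (b j * x (j - 1))) * hinv
        refine ⟨by simpa using hstep, ?_⟩
        rw [hstep]
        exact ((r (j + 1)).isUnit).mul hju
  -- wrap-around relation
  have hwrap : (r 1 : R) * (r p : R) = a p * (r p : R) + b p := by
    obtain ⟨hxp, _⟩ := key p hp le_rfl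
    have hxpm1u : IsUnit (x (p - 1)) := by
      rcases Nat.eq_or_lt_of_le hp with h1 | h2
      · rw [show p - 1 = 0 by omega, hx0]; exact isUnit_one
      · exact (key (p - 1) (by omega) (by omega)).2
    have hroot' : (r 1 : R) * x p = x (p + 1) := by
      simp only [hxdef]
      linear_combination hroot
    have h := hroot'.trans (hxrec p hp)
    rw [hxp] at h
    have h2 : ((r 1 : R) * (r p : R)) * x (p - 1) = (a p * (r p : R) + b p) * x (p - 1) := by
      linear_combination h
    exact hxpm1u.mul_right_cancel h2
  -- periodicity lemmas for multiples of p
  have hsk : ∀ k m, 1 ≤ m → s (m + k * p) = s m := by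
    intro k
    induction k with
    | zero => simp
    | succ k ih =>
      intro m hm
      have h := hsper (m + k * p) (by omega)
      rw [show m + (k + 1) * p = m + k * p + p by ring, h, ih m hm]
  have hak : ∀ k m, a (m + k * p) = a m := by
    intro k
    induction k with
    | zero => simp
    | succ k ih =>
      intro m
      rw [show m + (k + 1) * p = m + k * p + p by ring, ha, ih m]
  have hbk : ∀ k m, b (m + k * p) = b m := by
    intro k
    induction k with
    | zero => simp
    | succ k ih =>
      intro m
      rw [show m + (k + 1) * p = m + k * p + p by ring, hb, ih m]
  intro n hn
  obtain ⟨m, k, hm1, hmp, hnmk⟩ :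
      ∃ m k, 1 ≤ m ∧ m ≤ p ∧ n = m + k * p := by
    refine ⟨(n - 1) % p + 1, (n - 1) / p, by omega, ?_, ?_⟩
    · have := Nat.mod_lt (n - 1) hp; omega
    · have := Nat.div_add_mod' (n - 1) p; omega
  subst hnmk
  rw [hsk k m hm1, hak k m, hbk k m, hs m hm1 hmp]
  rcases Nat.eq_or_lt_of_le hmp with hmep | hmlt
  · -- m = p : wrap-around
    have : m + k * p + 1 = 1 + (k + 1) * p := by subst hmep; ring
    rw [this, hsk (k + 1) 1 le_rfl, hs 1 le_rfl hp, hmep]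
    exact hwrap
  · -- m < p
    have : m + k * p + 1 = (m + 1) + k * p := by omega
    rw [this, hsk k (m + 1) (by omega), hs (m + 1) (by omega) hmlt,
      hrec m hm1 hmlt]
    have hinv : (((r m)⁻¹ : Rˣ) : R) * (r m : R) = 1 := Units.inv_mul _
    linear_combination b m * hinv
end

section
/- Define a real sequence by r_{3j+1} = 3j+1, r_{3j+2} = −(3j+2)/(3j+1), r_{3j+3} = −1/(3j+2) for j ≥ 0. Then r_{n+1} r_n = a_n r_n − 1 for all n ≥ 1, where a_n = 2cos(2πn/3), i.e. a_{3j+1} = a_{3j+2} = −1, a_{3j+3} = 2. Hence {r_n} is an eigensequence of x_{n+1} = 2cos(2πn/3)x_n − x_{n-1}. -/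
lemma cos23 : Real.cos (2 * Real.pi / 3) = -(1/2) := by
  have : (2 * Real.pi / 3) = Real.pi - Real.pi / 3 := by ring
  rw [this, Real.cos_pi_sub, Real.cos_pi_div_three]

lemma acos_aux (j : ℕ) (k : ℕ) :
    Real.cos (2 * Real.pi * (3 * j + k) / 3) = Real.cos (2 * Real.pi * k / 3) := by
  have : (2 * Real.pi * (3 * j + k) / 3 : ℝ) = 2 * Real.pi * k / 3 + j * (2 * Real.pi) := by
    ring
  rw [this, Real.cos_add_nat_mul_two_pi]

/-- A nonperiodic eigensequence for `x_{n+1} = 2cos(2πn/3) x_n − x_{n-1}`. -/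
theorem nonperiodic_eigensequence (r a : ℕ → ℝ)
    (hr1 : ∀ j : ℕ, r (3 * j + 1) = 3 * j + 1)
    (hr2 : ∀ j : ℕ, r (3 * j + 2) = -((3 * j + 2) / (3 * j + 1)))
    (hr3 : ∀ j : ℕ, r (3 * j + 3) = -(1 / (3 * j + 2)))
    (hacos : ∀ n : ℕ, a n = 2 * Real.cos (2 * Real.pi * n / 3)) :
    (∀ j : ℕ, a (3 * j + 1) = -1 ∧ a (3 * j + 2) = -1 ∧ a (3 * j + 3) = 2) ∧
      ∀ n ≥ 1, r (n + 1) * r n = a n * r n - 1 := by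
  have ha1 : ∀ j : ℕ, a (3 * j + 1) = -1 := by
    intro j
    rw [hacos]
    have := acos_aux j 1
    push_cast at this ⊢
    rw [this]
    have h1 : (2 * Real.pi * (1:ℝ) / 3) = 2 * Real.pi / 3 := by ring
    rw [h1, cos23]; ring
  have ha2 : ∀ j : ℕ, a (3 * j + 2) = -1 := by
    intro j
    rw [hacos]
    have := acos_aux j 2
    push_cast at this ⊢
    rw [this]
    have h1 : (2 * Real.pi * (2:ℝ) / 3) = -(2 * Real.pi / 3) + 2 * Real.pi := by ring
    rw [h1, Real.cos_add_two_pi, Real.cos_neg, cos23]; ring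
  have ha3 : ∀ j : ℕ, a (3 * j + 3) = 2 := by
    intro j
    rw [hacos]
    have := acos_aux j 3
    push_cast at this ⊢
    rw [this]
    have h1 : (2 * Real.pi * (3:ℝ) / 3) = 0 + 2 * Real.pi := by ring
    rw [h1, Real.cos_add_two_pi, Real.cos_zero]; ring
  refine ⟨fun j => ⟨ha1 j, ha2 j, ha3 j⟩, ?_⟩
  intro n hn
  obtain ⟨j, rfl | rfl | rfl⟩ : ∃ j, n = 3*j+1 ∨ n = 3*j+2 ∨ n = 3*j+3 := by
    obtain ⟨j, k, hk, rfl⟩ : ∃ j k, k < 3 ∧ n = 3 * j + k :=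
      ⟨n / 3, n % 3, Nat.mod_lt _ (by norm_num), (Nat.div_add_mod n 3).symm⟩
    interval_cases k
    · exact ⟨j - 1, Or.inr (Or.inr (by omega))⟩
    · exact ⟨j, Or.inl rfl⟩
    · exact ⟨j, Or.inr (Or.inl rfl)⟩
  · have h2 : (3*j+1:ℕ)+1 = 3*j+2 := by ring
    rw [h2, hr2, hr1, ha1]
    have hpos : ((3*j+1:ℕ):ℝ) ≠ 0 := by positivity
    push_cast at hpos ⊢
    field_simp
    ring
  · have h2 : (3*j+2:ℕ)+1 = 3*j+3 := by ring
    rw [h2, hr3, hr2, ha2]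
    have hp1 : ((3:ℝ)*j+1) ≠ 0 := by positivity
    have hp2 : ((3:ℝ)*j+2) ≠ 0 := by positivity
    field_simp
    ring
  · have h2 : (3*j+3:ℕ)+1 = 3*(j+1)+1 := by ring
    rw [h2, hr3, hr1, ha3]
    have hp2 : ((3:ℝ)*j+2) ≠ 0 := by positivity
    push_cast
    field_simp
    ring
end
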